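/- Let P be a finite connected poset. If E(P) contains a crown with an edge (x,y) (x <_P y) such that (x,y) does not belong to any improper 4-crown in E(P), then P has a retract which is a crown containing x and y. -/

import Mathlib

def ConnectedPoset (α : Type*) [PartialOrder α] : Prop :=
  ∀ a b : α, Relation.ReflTransGen (fun u v : α => u ≤ v ∨ v ≤ u) a b

/-- The set of extremal points of a poset. -/
def EP (α : Type*) [PartialOrder α] : Set α := {z | IsMin z ∨ IsMax z}

/-- Comparability of two (distinct) points. -/
def Comp {α : Type*} [PartialOrder α] (x y : α) : Prop := x ≠ y ∧ (x ≤ y ∨ y ≤ x)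

/-- `S` is a crown: at least 4 points and its comparability graph is a cycle
(2-regular and connected). -/
def IsCrown {α : Type*} [PartialOrder α] (S : Set α) : Prop :=
  4 ≤ S.ncard ∧
  (∀ x ∈ S, {y | y ∈ S ∧ Comp x y}.ncard = 2) ∧
  ∀ x ∈ S, ∀ y ∈ S,
    Relation.ReflTransGen (fun u v : α => u ∈ S ∧ v ∈ S ∧ Comp u v) x y

/-- `C` is a retract of the whole poset. -/
def IsRetract {α : Type*} [PartialOrder α] (C : Set α) : Prop :=
  ∃ r : α → α, Monotone r ∧ (∀ z, r (r z) = r z) ∧ Set.range r = C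

/-- `{a,b,v,w}` is an improper 4-crown in `E(P)`. -/
def IsImproper4CrownE {α : Type*} [PartialOrder α] (a b v w : α) : Prop :=
  IsMin a ∧ IsMin b ∧ a ≠ b ∧ IsMax v ∧ IsMax w ∧ v ≠ w ∧
  a < v ∧ a < w ∧ b < v ∧ b < w ∧
  ∃ m : α, a < m ∧ b < m ∧ m < v ∧ m < w

namespace Stmt14
open Relation SimpleGraph
open scoped Classical

variable {α : Type*} [PartialOrder α]

/-- The comparability graph on extremal points, minus the edge `{x,y}`. -/
def EG (x y : α) : SimpleGraph α where
  Adj u v := (u < v ∨ v < u) ∧ (IsMin u ∨ IsMax u) ∧ (IsMin v ∨ IsMax v)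
    ∧ ¬(u = x ∧ v = y) ∧ ¬(u = y ∧ v = x)
  symm := by
    refine ⟨?_⟩; rintro u v ⟨h1, h2, h3, h4, h5⟩
    exact ⟨h1.symm, h3, h2, fun ⟨a, b⟩ => h5 ⟨b, a⟩, fun ⟨a, b⟩ => h4 ⟨b, a⟩⟩
  loopless := by
    refine ⟨?_⟩; rintro v ⟨h1, -⟩
    exact lt_irrefl v (h1.elim id id)

lemma adj_min (x y : α) {u v : α} (h : (EG x y).Adj u v) (hu : IsMin u) :
    u < v ∧ IsMax v ∧ ¬ IsMin v := by
  obtain ⟨h1, -, h3, -⟩ := h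
  have huv : u < v := by
    rcases h1 with h1 | h1
    · exact h1
    · exact absurd (le_antisymm h1.le (hu h1.le)) h1.ne
  have : ¬ IsMin v := fun hv => (lt_irrefl u) (lt_of_lt_of_le huv (hv huv.le))
  exact ⟨huv, h3.resolve_left this, this⟩

lemma adj_max (x y : α) {u v : α} (h : (EG x y).Adj u v) (hu : IsMax u) :
    v < u ∧ IsMin v ∧ ¬ IsMax v := by
  obtain ⟨h1, -, h3, -⟩ := h
  have hvu : v < u := by
    rcases h1 with h1 | h1
    · exact absurd (le_antisymm h1.le (hu h1.le)) h1.ne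
    · exact h1
  have : ¬ IsMax v := fun hv => (lt_irrefl u) (lt_of_le_of_lt (hv hvu.le) hvu)
  exact ⟨hvu, h3.resolve_right this, this⟩

/-- The extension machine: from a suitable map `ρ` on extremal points we build a
retraction of the whole poset onto `C`. -/
lemma machine [Fintype α] (C : Set α) (ρ : α → α)
    (hCE : ∀ v ∈ C, IsMin v ∨ IsMax v)
    (hfix : ∀ v ∈ C, ρ v = v)
    (hmin : ∀ a, IsMin a → ρ a ∈ C)
    (hmax : ∀ u, IsMax u → ρ u ∈ C)
    (hcomp : ∀ a u, IsMin a → IsMax u → a ≤ u → ρ a < ρ u)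
    (hK1 : ∀ z a a' u u', IsMin a → a ≤ z → IsMin a' → a' ≤ z →
      IsMax u → z ≤ u → IsMax u' → z ≤ u' → ρ a ≠ ρ a' → ρ u = ρ u')
    (hC2 : ∀ v ∈ C, IsMin v → ∃ u u', IsMax u ∧ IsMax u' ∧ v ≤ u ∧ v ≤ u' ∧ ρ u ≠ ρ u') :
    IsRetract C := by
  classical
  have hA : ∀ z : α, ∃ a, IsMin a ∧ a ≤ z := by
    intro z
    obtain ⟨b, hb, hbm⟩ := Finite.exists_le_minimal (p := fun _ : α => True) (a := z) trivial
    exact ⟨b, fun c hc => hbm.2 trivial hc, hb⟩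
  have hB : ∀ z : α, ∃ u, IsMax u ∧ z ≤ u := by
    intro z
    obtain ⟨b, hb, hbm⟩ := Finite.exists_le_maximal (p := fun _ : α => True) (a := z) trivial
    exact ⟨b, fun c hc => hbm.2 trivial hc, hb⟩
  let dB : α → Prop := fun z => ∃ u u', (IsMax u ∧ z ≤ u) ∧ (IsMax u' ∧ z ≤ u') ∧ ρ u ≠ ρ u'
  let r : α → α := fun z => if dB z then ρ (hA z).choose else ρ (hB z).choose
  have keyA : ∀ z, dB z → ∀ a, IsMin a → a ≤ z → r z = ρ a := by
    intro z hz a ha haz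
    obtain ⟨u, u', ⟨hu, hzu⟩, ⟨hu', hzu'⟩, hne⟩ := hz
    have hch := (hA z).choose_spec
    have heq : ρ (hA z).choose = ρ a := by
      by_contra hcon
      exact hne (hK1 z _ a u u' hch.1 hch.2 ha haz hu hzu hu' hzu' hcon)
    have hz' : dB z := ⟨u, u', ⟨hu, hzu⟩, ⟨hu', hzu'⟩, hne⟩
    show (if dB z then ρ (hA z).choose else ρ (hB z).choose) = ρ a
    rw [if_pos hz', heq]
  have keyB : ∀ z, ¬ dB z → ∀ u, IsMax u → z ≤ u → r z = ρ u := by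
    intro z hz u hu hzu
    have hch := (hB z).choose_spec
    have heq : ρ (hB z).choose = ρ u := by
      by_contra hcon
      exact hz ⟨_, u, ⟨hch.1, hch.2⟩, ⟨hu, hzu⟩, hcon⟩
    show (if dB z then ρ (hA z).choose else ρ (hB z).choose) = ρ u
    rw [if_neg hz, heq]
  have hmono : Monotone r := by
    intro z z' hzz'
    by_cases h' : dB z'
    · have h : dB z := by
        obtain ⟨u, u', ⟨hu, hzu⟩, ⟨hu', hzu'⟩, hne⟩ := h'
        exact ⟨u, u', ⟨hu, hzz'.trans hzu⟩, ⟨hu', hzz'.trans hzu'⟩, hne⟩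
      obtain ⟨a, ha, haz⟩ := hA z
      rw [keyA z h a ha haz, keyA z' h' a ha (haz.trans hzz')]
    · have hchB := (hB z').choose_spec
      rw [keyB z' h' _ hchB.1 hchB.2]
      by_cases h : dB z
      · have hchA := (hA z).choose_spec
        rw [keyA z h _ hchA.1 hchA.2]
        exact (hcomp _ _ hchA.1 hchB.1 (hchA.2.trans (hzz'.trans hchB.2))).le
      · rw [keyB z h _ hchB.1 (hzz'.trans hchB.2)]
  have hrng : ∀ z, r z ∈ C := by
    intro z
    by_cases h : dB z
    · rw [keyA z h _ (hA z).choose_spec.1 (hA z).choose_spec.2]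
      exact hmin _ (hA z).choose_spec.1
    · rw [keyB z h _ (hB z).choose_spec.1 (hB z).choose_spec.2]
      exact hmax _ (hB z).choose_spec.1
  have hfixr : ∀ v ∈ C, r v = v := by
    intro v hv
    rcases hCE v hv with hmn | hmx
    · obtain ⟨u, u', hu, hu', hvu, hvu', hne⟩ := hC2 v hv hmn
      have h : dB v := ⟨u, u', ⟨hu, hvu⟩, ⟨hu', hvu'⟩, hne⟩
      rw [keyA v h v hmn le_rfl]
      exact hfix v hv
    · have h : ¬ dB v := by
        rintro ⟨u, u', ⟨hu, hvu⟩, ⟨hu', hvu'⟩, hne⟩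
        obtain rfl : v = u := le_antisymm hvu (hmx hvu)
        obtain rfl : v = u' := le_antisymm hvu' (hmx hvu')
        exact hne rfl
      rw [keyB v h v hmx le_rfl]
      exact hfix v hv
  refine ⟨r, hmono, fun z => hfixr _ (hrng z), ?_⟩
  ext v
  constructor
  · rintro ⟨z, rfl⟩; exact hrng z
  · intro hv; exact ⟨v, hfixr v hv⟩


lemma noIso (hconn : ConnectedPoset α) {a b : α} (hab : a ≠ b)
    {v : α} (h1 : IsMin v) (h2 : IsMax v) : False := by
  have key : ∀ w, Relation.ReflTransGen (fun u v : α => u ≤ v ∨ v ≤ u) v w → v = w := by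
    intro w h
    induction h with
    | refl => rfl
    | @tail b' w' h1' h2' ih =>
      rcases h2' with h | h
      · rw [← ih] at h; exact le_antisymm h (h2 h)
      · rw [← ih] at h; exact le_antisymm (h1 h) h
  exact hab ((key a (hconn v a)).symm.trans (key b (hconn v b)))

lemma walk_parity (x y : α) {u v : α} (W : (EG x y).Walk u v) :
    (W.length : ZMod 2) = (if IsMin v then 0 else 1) - (if IsMin u then 0 else 1) := by
  induction W with
  | nil => simp
  | @cons u w v h p ih =>
    have hside : (if IsMin w then (0:ZMod 2) else 1) = (if IsMin u then 0 else 1) + 1 := by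
      by_cases hu : IsMin u
      · obtain ⟨-, -, hnm⟩ := adj_min x y h hu
        simp [hu, hnm]
      · have hu' : IsMax u := (h.2.1.resolve_left hu)
        obtain ⟨-, hw, -⟩ := adj_max x y h hu'
        simp only [if_pos hw, if_neg hu]
        decide
    simp only [SimpleGraph.Walk.length_cons]
    push_cast
    rw [ih, hside]; ring

lemma even_dist_iff (x y : α) {v : α} (hr : (EG x y).Reachable x v) (hx : IsMin x) :
    IsMin v ↔ Even ((EG x y).dist x v) := by
  obtain ⟨W, hW⟩ := hr.exists_walk_length_eq_dist
  have hp := walk_parity x y W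
  rw [hW, if_pos hx, sub_zero] at hp
  have heven : ∀ n : ℕ, Even n ↔ (n : ZMod 2) = 0 := by
    intro n
    rw [ZMod.natCast_eq_zero_iff n 2]
    exact even_iff_two_dvd
  constructor
  · intro hmin
    rw [heven, hp, if_pos hmin]
  · intro hev
    by_contra hnm
    rw [heven, hp, if_neg hnm] at hev
    exact one_ne_zero hev


lemma exists_min_le [Finite α] (z : α) : ∃ a, IsMin a ∧ a ≤ z := by
  obtain ⟨b, hb, hbm⟩ := Finite.exists_le_minimal (p := fun _ : α => True) (a := z) trivial
  exact ⟨b, fun c hc => hbm.2 trivial hc, hb⟩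

lemma exists_le_max [Finite α] (z : α) : ∃ u, IsMax u ∧ z ≤ u := by
  obtain ⟨b, hb, hbm⟩ := Finite.exists_le_maximal (p := fun _ : α => True) (a := z) trivial
  exact ⟨b, fun c hc => hbm.2 trivial hc, hb⟩

section Reach
variable [Fintype α] {x y : α}

lemma adj_xx (hconn : ConnectedPoset α) (hxy : x < y) {p u : α}
    (hp : IsMin p) (hu : IsMax u) (hpu : p ≤ u) : (EG x x).Adj u p := by
  have hne : p ≠ u := fun h => noIso hconn hxy.ne (h ▸ hp) (h ▸ hu)
  refine ⟨Or.inr (lt_of_le_of_ne hpu hne), Or.inr hu, Or.inl hp, ?_, ?_⟩ <;>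
    (rintro ⟨rfl, rfl⟩; exact hne rfl)

lemma reach_mm (hconn : ConnectedPoset α) (hxy : x < y) {a b : α}
    (h : Relation.ReflTransGen (fun u v : α => u ≤ v ∨ v ≤ u) a b) :
    ∀ {u w : α}, IsMax u → a ≤ u → IsMax w → b ≤ w → (EG x x).Reachable u w := by
  induction h with
  | refl =>
    intro u w hu hau hw haw
    obtain ⟨p, hp, hpa⟩ := exists_min_le a
    exact ((adj_xx hconn hxy hp hu (hpa.trans hau)).reachable).trans
      ((adj_xx hconn hxy hp hw (hpa.trans haw)).reachable).symm
  | @tail b' c' hrt hstep ih =>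
    intro u w hu hau hw hcw
    obtain ⟨M, hM, hbM⟩ := exists_le_max b'
    refine (ih hu hau hM hbM).trans ?_
    rcases hstep with h | h
    · obtain ⟨p, hp, hpb⟩ := exists_min_le b'
      exact ((adj_xx hconn hxy hp hM (hpb.trans hbM)).reachable).trans
        ((adj_xx hconn hxy hp hw ((hpb.trans h).trans hcw)).reachable).symm
    · obtain ⟨p, hp, hpc⟩ := exists_min_le c'
      exact ((adj_xx hconn hxy hp hM ((hpc.trans h).trans hbM)).reachable).trans
        ((adj_xx hconn hxy hp hw (hpc.trans hcw)).reachable).symm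

lemma reach_all_xx (hconn : ConnectedPoset α) (hxy : x < y) (hxmin : IsMin x)
    (v : α) (hv : IsMin v ∨ IsMax v) : (EG x x).Reachable v x := by
  obtain ⟨Mx, hMx, hxMx⟩ := exists_le_max x
  have hx1 : (EG x x).Reachable x Mx := (adj_xx hconn hxy hxmin hMx hxMx).reachable.symm
  obtain ⟨Mv, hMv, hvMv⟩ := exists_le_max v
  have hmid : (EG x x).Reachable Mv Mx :=
    reach_mm hconn hxy (hconn v x) hMv hvMv hMx hxMx
  have hlast : (EG x x).Reachable v Mv := by
    rcases hv with hvmin | hvmax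
    · exact (adj_xx hconn hxy hvmin hMv hvMv).reachable.symm
    · obtain rfl : v = Mv := le_antisymm hvMv (hvmax hvMv)
      exact SimpleGraph.Reachable.refl _
  exact (hlast.trans hmid).trans hx1.symm

lemma reach_transfer (hR : (EG x y).Reachable x y) {u v : α}
    (h : (EG x x).Reachable u v) : (EG x y).Reachable u v := by
  obtain ⟨W⟩ := h
  induction W with
  | nil => exact SimpleGraph.Reachable.refl _
  | @cons u w v h p ih =>
    refine SimpleGraph.Reachable.trans ?_ ih
    by_cases hxy1 : u = x ∧ w = y
    · obtain ⟨rfl, rfl⟩ := hxy1; exact hR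
    · by_cases hxy2 : u = y ∧ w = x
      · obtain ⟨rfl, rfl⟩ := hxy2; exact hR.symm
      · exact (SimpleGraph.Adj.reachable ⟨h.1, h.2.1, h.2.2.1, hxy1, hxy2⟩)

end Reach


lemma reach_xy [Fintype α] {S : Set α} (hSE : S ⊆ EP α)
    (hS2 : ∀ v ∈ S, {u | u ∈ S ∧ Comp v u}.ncard = 2)
    {x y : α} (hx : x ∈ S) (hy : y ∈ S) (hxy : x < y) :
    (EG x y).Reachable x y := by
  by_contra hnr
  set T : Set α := {v | v ∈ S ∧ (EG x y).Reachable v y} with hT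
  have hyT : y ∈ T := ⟨hy, SimpleGraph.Reachable.refl _⟩
  have hxT : x ∉ T := fun h => hnr h.2
  let G' : SimpleGraph α :=
    { Adj := fun u v => u ∈ T ∧ v ∈ T ∧ Comp u v
      symm := by refine ⟨?_⟩; rintro u v ⟨h1, h2, h3, h4⟩; exact ⟨h2, h1, h3.symm, h4.symm⟩
      loopless := by refine ⟨?_⟩; rintro v ⟨-, -, h3, -⟩; exact h3 rfl }
  have hadj : ∀ {u v : α}, u ∈ S → v ∈ S → Comp u v →
      ¬(u = x ∧ v = y) → ¬(u = y ∧ v = x) → (EG x y).Adj u v := by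
    intro u v hu hv hc h1 h2
    refine ⟨?_, hSE hu, hSE hv, h1, h2⟩
    rcases hc.2 with h | h
    · exact Or.inl (lt_of_le_of_ne h hc.1)
    · exact Or.inr (lt_of_le_of_ne h (Ne.symm hc.1))
  have hstep : ∀ {v u : α}, v ∈ T → u ∈ S → Comp v u →
      ¬(u = x ∧ v = y) → ¬(u = y ∧ v = x) → u ∈ T := by
    intro v u hv hu hc h1 h2
    exact ⟨hu, ((hadj hu hv.1 ⟨Ne.symm hc.1, hc.2.symm⟩ h1 h2).reachable).trans hv.2⟩
  classical
  have hTfin := Set.toFinite T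
  set Tf := hTfin.toFinset with hTf
  have hmemTf : ∀ v, v ∈ Tf ↔ v ∈ T := fun v => Set.Finite.mem_toFinset _
  -- degree of vertices in T, other than y, is 2
  have hdeg2 : ∀ v ∈ T, v ≠ y → (G'.neighborFinset v).card = 2 := by
    intro v hv hvy
    have hvx : v ≠ x := fun h => hxT (h ▸ hv)
    obtain ⟨p, q, hpq, hset⟩ := Set.ncard_eq_two.mp (hS2 v hv.1)
    have hmem : ∀ u, (u ∈ S ∧ Comp v u) ↔ (u = p ∨ u = q) := by
      intro u
      constructor
      · intro h
        have : u ∈ ({p, q} : Set α) := hset ▸ h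
        simpa using this
      · intro h
        have : u ∈ ({p, q} : Set α) := by simpa using h
        rw [← hset] at this
        exact this
    have hin : ∀ u, (u = p ∨ u = q) → u ∈ T ∧ Comp v u := by
      intro u hu
      obtain ⟨huS, hc⟩ := (hmem u).mpr hu
      refine ⟨hstep hv huS hc ?_ ?_, hc⟩
      · rintro ⟨-, rfl⟩; exact hvy rfl
      · rintro ⟨-, rfl⟩; exact hvx rfl
    have : G'.neighborFinset v = {p, q} := by
      ext u
      rw [SimpleGraph.mem_neighborFinset]
      constructor
      · rintro ⟨-, hu, hc⟩
        have := (hmem u).mp ⟨hu.1, hc⟩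
        simpa using this
      · intro hu
        have hu' : u = p ∨ u = q := by simpa using hu
        obtain ⟨h1, h2⟩ := hin u hu'
        exact ⟨hv, h1, h2⟩
    rw [this]
    exact Finset.card_pair hpq
  have hdeg1 : (G'.neighborFinset y).card = 1 := by
    obtain ⟨p, q, hpq, hset⟩ := Set.ncard_eq_two.mp (hS2 y hy)
    have hmem : ∀ u, (u ∈ S ∧ Comp y u) ↔ (u = p ∨ u = q) := by
      intro u
      constructor
      · intro h
        have : u ∈ ({p, q} : Set α) := hset ▸ h
        simpa using this
      · intro h
        have : u ∈ ({p, q} : Set α) := by simpa using h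
        rw [← hset] at this
        exact this
    have hxpq : x = p ∨ x = q := (hmem x).mp ⟨hx, ⟨hxy.ne', Or.inr hxy.le⟩⟩
    -- b is the partner of y different from x
    obtain ⟨b, hbx, hbmem⟩ : ∃ b, b ≠ x ∧ ∀ u, (u ∈ S ∧ Comp y u) ↔ (u = x ∨ u = b) := by
      rcases hxpq with rfl | rfl
      · exact ⟨q, fun h => hpq h.symm, hmem⟩
      · exact ⟨p, fun h => hpq h, fun u => (hmem u).trans or_comm⟩
    have hbS : b ∈ S ∧ Comp y b := (hbmem b).mpr (Or.inr rfl)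
    have hbT : b ∈ T := by
      refine hstep hyT hbS.1 hbS.2 ?_ ?_
      · rintro ⟨rfl, -⟩; exact hbx rfl
      · rintro ⟨rfl, -⟩; exact hbS.2.1 rfl
    have : G'.neighborFinset y = {b} := by
      ext u
      rw [SimpleGraph.mem_neighborFinset]
      constructor
      · rintro ⟨-, hu, hc⟩
        rcases (hbmem u).mp ⟨hu.1, hc⟩ with rfl | rfl
        · exact absurd hu hxT
        · exact Finset.mem_singleton_self u
      · intro hu
        have : u = b := by simpa using hu
        subst this
        exact ⟨hyT, hbT, hbS.2⟩
    rw [this]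
    exact Finset.card_singleton b
  have hdeg0 : ∀ v, v ∉ T → (G'.neighborFinset v).card = 0 := by
    intro v hv
    rw [Finset.card_eq_zero]
    ext u
    rw [SimpleGraph.mem_neighborFinset]
    simp only [Finset.notMem_empty, iff_false]
    rintro ⟨h1, -⟩
    exact hv h1
  have hsum := G'.sum_degrees_eq_twice_card_edges
  have hsum2 : ∑ v, G'.degree v = ∑ v ∈ Tf, G'.degree v := by
    refine (Finset.sum_subset (Finset.subset_univ Tf) ?_).symm
    intro v _ hv
    exact hdeg0 v (fun h => hv ((hmemTf v).mpr h))
  have hyTf : y ∈ Tf := (hmemTf y).mpr hyT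
  have hsum3 : ∑ v ∈ Tf, G'.degree v = G'.degree y + ∑ v ∈ Tf.erase y, G'.degree v :=
    (Finset.add_sum_erase Tf _ hyTf).symm
  have hsum4 : ∑ v ∈ Tf.erase y, G'.degree v = 2 * (Tf.erase y).card := by
    rw [Finset.sum_congr rfl (g := fun _ => 2), Finset.sum_const, smul_eq_mul, mul_comm]
    intro v hv
    exact hdeg2 v ((hmemTf v).mp (Finset.mem_of_mem_erase hv)) (Finset.ne_of_mem_erase hv)
  have hdy : G'.degree y = 1 := hdeg1
  omega


end Stmt14

open Stmt14 in
/-- if `E(P)` contains a crown having an edge `(x,y)` not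
belonging to any improper 4-crown of `E(P)`, then `P` has a retract which is
a crown containing `x` and `y`. -/
theorem stmt14 {α : Type*} [PartialOrder α] [Fintype α]
    (hconn : ConnectedPoset α)
    (S : Set α) (hSE : S ⊆ EP α) (hS : IsCrown S)
    (x y : α) (hx : x ∈ S) (hy : y ∈ S) (hxy : x < y)
    (hedge : ¬ ∃ a b v w : α, IsImproper4CrownE a b v w ∧
      (x = a ∨ x = b) ∧ (y = v ∨ y = w)) :
    ∃ C : Set α, IsCrown C ∧ x ∈ C ∧ y ∈ C ∧ IsRetract C := by
  classical
  obtain ⟨hS4, hS2, hScon⟩ := hS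
  have hxmin : IsMin x := by
    rcases hSE hx with h | h
    · exact h
    · exact absurd (le_antisymm hxy.le (h hxy.le)) hxy.ne
  have hymax : IsMax y := by
    rcases hSE hy with h | h
    · exact absurd (le_antisymm hxy.le (h hxy.le)) hxy.ne
    · exact h
  have hynmin : ¬ IsMin y := fun h => hxy.ne (le_antisymm hxy.le (h hxy.le))
  have hR : (EG x y).Reachable x y := reach_xy hSE hS2 hx hy hxy
  set G := EG x y with hG
  set D := G.dist x y with hD
  obtain ⟨W, hW⟩ := hR.exists_walk_length_eq_dist
  set c : ℕ → α := W.getVert with hcdef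
  have hc0 : c 0 = x := W.getVert_zero
  have hcD : c D = y := by
    have := W.getVert_length
    rwa [hW] at this
  have hadjc : ∀ i, i < D → G.Adj (c i) (c (i + 1)) := by
    intro i hi
    exact W.adj_getVert_succ (by rw [hW]; exact hi)
  have hreach : ∀ v, (IsMin v ∨ IsMax v) → G.Reachable x v := by
    intro v hv
    exact (reach_transfer hR (reach_all_xx hconn hxy hxmin v hv)).symm
  have hext : ∀ i, i ≤ D → (IsMin (c i) ∨ IsMax (c i)) := by
    intro i hi
    rcases lt_or_eq_of_le hi with h | h
    · exact (hadjc i h).2.1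
    · rw [h, hcD]; exact Or.inr hymax
  set g : α → ℕ := fun v => G.dist x v with hgdef
  have hdist_step : ∀ {u v : α}, G.Adj u v → g v ≤ g u + 1 := by
    intro u v h
    obtain ⟨Wu, hWu⟩ := (hreach u h.2.1).exists_walk_length_eq_dist
    have := SimpleGraph.dist_le (Wu.concat h)
    rwa [SimpleGraph.Walk.length_concat, hWu] at this
  have hgc_le : ∀ i, i ≤ D → g (c i) ≤ i := by
    intro i
    induction i with
    | zero => intro _; simp [hgdef, hc0, SimpleGraph.dist_self]
    | succ n ih =>
      intro hn
      have h1 := ih (by omega)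
      have h2 := hdist_step (hadjc n (by omega))
      omega
  have hsufaux : ∀ j, j ≤ D → G.dist (c (D - j)) y ≤ j := by
    intro j
    induction j with
    | zero => intro _; simp [hcD, SimpleGraph.dist_self]
    | succ n ih =>
      intro hn
      have hlt : D - (n + 1) < D := by omega
      have hadj := hadjc (D - (n + 1)) hlt
      have heq : D - (n + 1) + 1 = D - n := by omega
      rw [heq] at hadj
      obtain ⟨W2, hW2⟩ := ((hreach _ (hext (D - n) (by omega))).symm.trans
        (hreach y (Or.inr hymax))).exists_walk_length_eq_dist
      have := SimpleGraph.dist_le (SimpleGraph.Walk.cons hadj W2)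
      rw [SimpleGraph.Walk.length_cons, hW2] at this
      have := ih (by omega)
      omega
  have hgc : ∀ i, i ≤ D → g (c i) = i := by
    intro i hi
    have h1 := hgc_le i hi
    have h2 : G.dist (c i) y ≤ D - i := by
      have := hsufaux (D - i) (by omega)
      rw [show D - (D - i) = i by omega] at this
      exact this
    have h3 : D ≤ g (c i) + G.dist (c i) y := by
      obtain ⟨W1, hW1⟩ := (hreach _ (hext i hi)).exists_walk_length_eq_dist
      obtain ⟨W2, hW2⟩ := ((hreach _ (hext i hi)).symm.trans
        (hreach y (Or.inr hymax))).exists_walk_length_eq_dist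
      have := SimpleGraph.dist_le (W1.append W2)
      rwa [SimpleGraph.Walk.length_append, hW1, hW2] at this
    omega
  have hcinj : ∀ i, i ≤ D → ∀ j, j ≤ D → c i = c j → i = j := by
    intro i hi j hj hc
    have := hgc i hi
    rw [hc, hgc j hj] at this
    omega
  have hpar : ∀ i, i ≤ D → (IsMin (c i) ↔ Even i) := by
    intro i hi
    have := even_dist_iff x y (hreach _ (hext i hi)) hxmin
    rw [show (EG x y).dist x (c i) = g (c i) from rfl, hgc i hi] at this
    exact this
  have hmax' : ∀ i, i ≤ D → ¬ Even i → IsMax (c i) := by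
    intro i hi h
    exact (hext i hi).resolve_left (fun hm => h ((hpar i hi).mp hm))
  have hDodd : ¬ Even D := fun h => hynmin (hcD ▸ (hpar D le_rfl).mpr h)
  have hD3 : 3 ≤ D := by
    have h0 : D ≠ 0 := fun h => hxy.ne (by rw [← hc0, ← hcD, h])
    have h1 : D ≠ 1 := by
      intro h
      have hadj := hadjc 0 (by omega)
      have hc1 : c 1 = y := by rw [show (1:ℕ) = D by omega, hcD]
      exact hadj.2.2.2.1 ⟨hc0, hc1⟩
    have h2 : D ≠ 2 := fun h => hDodd (h ▸ ⟨1, rfl⟩)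
    omega
  -- strict order of consecutive crown points
  have hlt : ∀ i, i < D → IsMin (c i) → c i < c (i + 1) :=
    fun i hi hm => (adj_min x y (hadjc i hi) hm).1
  have hlt' : ∀ i, i < D → IsMin (c (i + 1)) → c (i + 1) < c i :=
    fun i hi hm => (adj_min x y (hadjc i hi).symm hm).1
  -- comparability characterisation
  have hcomp_iff : ∀ i, i ≤ D → ∀ j, j ≤ D → (Comp (c i) (c j) ↔
      (j = i + 1 ∨ i = j + 1 ∨ (i = 0 ∧ j = D) ∨ (i = D ∧ j = 0))) := by
    intro i hi j hj
    constructor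
    · intro hc
      by_cases hxy1 : c i = x ∧ c j = y
      · refine Or.inr (Or.inr (Or.inl ⟨?_, ?_⟩))
        · exact hcinj i hi 0 (by omega) (by rw [hc0, hxy1.1])
        · exact hcinj j hj D le_rfl (by rw [hcD, hxy1.2])
      · by_cases hxy2 : c i = y ∧ c j = x
        · refine Or.inr (Or.inr (Or.inr ⟨?_, ?_⟩))
          · exact hcinj i hi D le_rfl (by rw [hcD, hxy2.1])
          · exact hcinj j hj 0 (by omega) (by rw [hc0, hxy2.2])
        · have hadj : G.Adj (c i) (c j) := by
            refine ⟨?_, hext i hi, hext j hj, hxy1, hxy2⟩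
            rcases hc.2 with h | h
            · exact Or.inl (lt_of_le_of_ne h hc.1)
            · exact Or.inr (lt_of_le_of_ne h (Ne.symm hc.1))
          have h1 := hdist_step hadj
          have h2 := hdist_step hadj.symm
          rw [hgc i hi, hgc j hj] at h1 h2
          have hne : i ≠ j := fun h => hc.1 (h ▸ rfl)
          omega
    · intro h
      have hcompadj : ∀ k, k < D → Comp (c k) (c (k + 1)) := by
        intro k hk
        have := hadjc k hk
        rcases this.1 with h | h
        · exact ⟨h.ne, Or.inl h.le⟩
        · exact ⟨h.ne', Or.inr h.le⟩
      rcases h with rfl | hh | ⟨rfl, rfl⟩ | ⟨rfl, rfl⟩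
      · exact hcompadj i (by omega)
      · rw [hh]
        exact ⟨(hcompadj j (by omega)).1.symm, (hcompadj j (by omega)).2.symm⟩
      · rw [hc0, hcD]; exact ⟨hxy.ne, Or.inl hxy.le⟩
      · rw [hc0, hcD]; exact ⟨hxy.ne', Or.inr hxy.le⟩
  -- the crown
  set C : Set α := c '' (Set.Iic D) with hCdef
  have hmemC : ∀ v, v ∈ C ↔ ∃ i, i ≤ D ∧ c i = v := by
    intro v
    constructor
    · rintro ⟨i, hi, rfl⟩; exact ⟨i, hi, rfl⟩
    · rintro ⟨i, hi, rfl⟩; exact ⟨i, hi, rfl⟩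
  have hxC : x ∈ C := ⟨0, by simp, hc0⟩
  have hyC : y ∈ C := ⟨D, by simp, hcD⟩
  have hCE : ∀ v ∈ C, IsMin v ∨ IsMax v := by
    rintro v ⟨i, hi, rfl⟩
    exact hext i hi
  have hCcrown : IsCrown C := by
    refine ⟨?_, ?_, ?_⟩
    · have hCeq : C = ↑((Finset.Iic D).image c) := by
        rw [hCdef, ← Finset.coe_Iic, Finset.coe_image]
      rw [hCeq, Set.ncard_coe_finset, Finset.card_image_of_injOn]
      · rw [Nat.card_Iic]; omega
      · intro i hi j hj hij
        exact hcinj i (Finset.mem_Iic.mp hi) j (Finset.mem_Iic.mp hj) hij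
    · rintro v ⟨i, hi', rfl⟩
      have hi : i ≤ D := hi'
      obtain ⟨j1, j2, hj1, hj2, hne12, hiff⟩ : ∃ j1 j2, j1 ≤ D ∧ j2 ≤ D ∧ j1 ≠ j2 ∧
          (∀ j, j ≤ D → ((j = i + 1 ∨ i = j + 1 ∨ (i = 0 ∧ j = D) ∨ (i = D ∧ j = 0)) ↔
            (j = j1 ∨ j = j2))) := by
        by_cases hi0 : i = 0
        · exact ⟨1, D, by omega, le_rfl, by omega, fun j hj => by omega⟩
        · by_cases hiD : i = D
          · exact ⟨D - 1, 0, by omega, by omega, by omega, fun j hj => by omega⟩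
          · exact ⟨i + 1, i - 1, by omega, by omega, by omega, fun j hj => by omega⟩
      have hseteq : {u | u ∈ C ∧ Comp (c i) u} = {c j1, c j2} := by
        ext u
        simp only [Set.mem_setOf_eq, Set.mem_insert_iff, Set.mem_singleton_iff]
        constructor
        · rintro ⟨⟨j, hj', rfl⟩, hcmp⟩
          have hj : j ≤ D := hj'
          have := (hcomp_iff i hi j hj).mp hcmp
          rcases (hiff j hj).mp this with h | h <;> subst h
          · exact Or.inl rfl
          · exact Or.inr rfl
        · rintro (rfl | rfl)
          · exact ⟨⟨j1, hj1, rfl⟩, (hcomp_iff i hi j1 hj1).mpr ((hiff j1 hj1).mpr (Or.inl rfl))⟩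
          · exact ⟨⟨j2, hj2, rfl⟩, (hcomp_iff i hi j2 hj2).mpr ((hiff j2 hj2).mpr (Or.inr rfl))⟩
      rw [hseteq]
      exact Set.ncard_pair (fun h => hne12 (hcinj j1 hj1 j2 hj2 h))
    · have hrel : ∀ j, j ≤ D →
          Relation.ReflTransGen (fun u v : α => u ∈ C ∧ v ∈ C ∧ Comp u v) (c 0) (c j) := by
        intro j
        induction j with
        | zero => intro _; exact Relation.ReflTransGen.refl
        | succ n ih =>
          intro hn
          refine Relation.ReflTransGen.tail (ih (by omega))
            ⟨⟨n, by simp; omega, rfl⟩, ⟨n + 1, by simp; omega, rfl⟩, ?_⟩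
          exact (hcomp_iff n (by omega) (n + 1) hn).mpr (Or.inl rfl)
      rintro v ⟨i, hi', rfl⟩ w ⟨j, hj', rfl⟩
      have hsym : Symmetric (fun u v : α => u ∈ C ∧ v ∈ C ∧ Comp u v) := by
        rintro u v ⟨h1, h2, h3, h4⟩
        exact ⟨h2, h1, Ne.symm h3, h4.symm⟩
      exact ((@Relation.ReflTransGen.symmetric _ _ ⟨fun _ _ h => hsym h⟩).symm _ _ (hrel i hi')).trans (hrel j hj')
  have hC2gen : ∀ (p : α → α), (∀ w ∈ C, p w = w) → ∀ v ∈ C, IsMin v →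
      ∃ u u', IsMax u ∧ IsMax u' ∧ v ≤ u ∧ v ≤ u' ∧ p u ≠ p u' := by
    intro p hfix v hvC hvmin
    obtain ⟨i, hi', rfl⟩ := hvC
    have hi : i ≤ D := hi'
    have hiev : Even i := (hpar i hi).mp hvmin
    have hpo : ∀ k, k ≤ D → k % 2 = 1 → IsMax (c k) := by
      intro k hk hkp
      exact hmax' k hk (by rw [Nat.even_iff]; omega)
    have hie2 : i % 2 = 0 := Nat.even_iff.mp hiev
    by_cases hi0 : i = 0
    · subst hi0
      refine ⟨c 1, c D, hpo 1 (by omega) (by omega), hcD ▸ hymax, ?_, ?_, ?_⟩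
      · exact (hlt 0 (by omega) hvmin).le
      · rw [hc0, hcD]; exact hxy.le
      · rw [hfix (c 1) ⟨1, by simp; omega, rfl⟩, hfix (c D) ⟨D, by simp, rfl⟩]
        exact fun h => (by omega : (1 : ℕ) ≠ D) (hcinj 1 (by omega) D le_rfl h)
    · have hiD : i < D := lt_of_le_of_ne hi (fun h => hDodd (h ▸ hiev))
      have hmin1 : IsMin (c (i - 1 + 1)) := by rw [show i - 1 + 1 = i by omega]; exact hvmin
      refine ⟨c (i - 1), c (i + 1), hpo (i - 1) (by omega) (by omega),
        hpo (i + 1) (by omega) (by omega), ?_, ?_, ?_⟩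
      · have := (hlt' (i - 1) (by omega) hmin1).le
        rwa [show i - 1 + 1 = i by omega] at this
      · exact (hlt i hiD hvmin).le
      · rw [hfix (c (i - 1)) ⟨i - 1, by simp; omega, rfl⟩,
          hfix (c (i + 1)) ⟨i + 1, by simp; omega, rfl⟩]
        exact fun h => (by omega : i - 1 ≠ i + 1) (hcinj (i - 1) (by omega) (i + 1) (by omega) h)
  by_cases hD5 : D = 3
  · -- the 4-crown case, using the hypothesis `hedge`
    set ρ : α → α := fun v =>
      if IsMin v then (if v = x then x else c 2) else (if v = y then y else c 1) with hρ
    have hc2min : IsMin (c 2) := (hpar 2 (by omega)).mpr ⟨1, rfl⟩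
    have hc1max : IsMax (c 1) := hmax' 1 (by omega) (by decide)
    have hc2nx : c 2 ≠ x := by
      rw [← hc0]
      exact fun h => (by omega : (2 : ℕ) ≠ 0) (hcinj 2 (by omega) 0 (by omega) h)
    have hc1ny : c 1 ≠ y := by
      rw [← hcD]
      exact fun h => (by omega : (1 : ℕ) ≠ D) (hcinj 1 (by omega) D le_rfl h)
    have hx1 : x < c 1 := by
      have := hlt 0 (by omega) (by rw [hc0]; exact hxmin)
      rwa [hc0] at this
    have h21 : c 2 < c 1 := hlt' 1 (by omega) hc2min
    have h2y : c 2 < y := by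
      have := hlt 2 (by omega) hc2min
      rwa [show (2 : ℕ) + 1 = D by omega, hcD] at this
    have hρ_min : ∀ a, IsMin a → ρ a = if a = x then x else c 2 := by
      intro a ha
      rw [hρ]
      exact if_pos ha
    have hρ_max : ∀ u, IsMax u → ρ u = if u = y then y else c 1 := by
      intro u hu
      rw [hρ]
      exact if_neg (fun h => noIso hconn hxy.ne h hu)
    have hfixρ : ∀ w ∈ C, ρ w = w := by
      rintro w ⟨i, hi', rfl⟩
      have hi : i ≤ D := hi'
      have hi3 : i ≤ 3 := by omega
      interval_cases i
      · rw [hc0, hρ_min x hxmin, if_pos rfl]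
      · rw [hρ_max _ hc1max, if_neg hc1ny]
      · rw [hρ_min _ hc2min, if_neg hc2nx]
      · rw [show (3 : ℕ) = D by omega, hcD, hρ_max _ hymax, if_pos rfl]
    have hminρ : ∀ a, IsMin a → ρ a ∈ C := by
      intro a ha
      rw [hρ_min a ha]
      by_cases h : a = x
      · rw [if_pos h]; exact hxC
      · rw [if_neg h]; exact ⟨2, by simp; omega, rfl⟩
    have hmaxρ : ∀ u, IsMax u → ρ u ∈ C := by
      intro u hu
      rw [hρ_max u hu]
      by_cases h : u = y
      · rw [if_pos h]; exact hyC
      · rw [if_neg h]; exact ⟨1, by simp; omega, rfl⟩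
    have hcompρ : ∀ a u, IsMin a → IsMax u → a ≤ u → ρ a < ρ u := by
      intro a u ha hu _
      rw [hρ_min a ha, hρ_max u hu]
      by_cases h1 : a = x <;> by_cases h2 : u = y <;>
        simp only [if_pos, if_neg, h1, h2, if_true, if_false]
      · exact hxy
      · exact hx1
      · exact h2y
      · exact h21
    have hK1ρ : ∀ z a a' u u', IsMin a → a ≤ z → IsMin a' → a' ≤ z →
        IsMax u → z ≤ u → IsMax u' → z ≤ u' → ρ a ≠ ρ a' → ρ u = ρ u' := by
      intro z a a' u u' ha haz ha' ha'z hu hzu hu' hzu' hne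
      by_contra hneU
      have hxa : (a = x ∧ a' ≠ x) ∨ (a' = x ∧ a ≠ x) := by
        by_cases h1 : a = x
        · by_cases h2 : a' = x
          · rw [hρ_min a ha, hρ_min a' ha', if_pos h1, if_pos h2] at hne
            exact absurd rfl hne
          · exact Or.inl ⟨h1, h2⟩
        · by_cases h2 : a' = x
          · exact Or.inr ⟨h2, h1⟩
          · rw [hρ_min a ha, hρ_min a' ha', if_neg h1, if_neg h2] at hne
            exact absurd rfl hne
      have hyu : (u = y ∧ u' ≠ y) ∨ (u' = y ∧ u ≠ y) := by
        by_cases h1 : u = y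
        · by_cases h2 : u' = y
          · rw [hρ_max u hu, hρ_max u' hu', if_pos h1, if_pos h2] at hneU
            exact absurd rfl hneU
          · exact Or.inl ⟨h1, h2⟩
        · by_cases h2 : u' = y
          · exact Or.inr ⟨h2, h1⟩
          · rw [hρ_max u hu, hρ_max u' hu', if_neg h1, if_neg h2] at hneU
            exact absurd rfl hneU
      have key : ∀ b w, IsMin b → b ≤ z → b ≠ x → IsMax w → z ≤ w → w ≠ y →
          x ≤ z → z ≤ y → False := by
        intro b w hb hbz hbx hw hzw hwy hxz hzy
        have hxz' : x < z := lt_of_le_of_ne hxz (by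
          intro h
          rw [← h] at hbz
          exact hbx (le_antisymm hbz (hxmin hbz)))
        have hbz' : b < z := lt_of_le_of_ne hbz (by
          intro h
          rw [← h] at hxz
          exact hbx (le_antisymm (hb hxz) hxz))
        have hzy' : z < y := lt_of_le_of_ne hzy (by
          intro h
          rw [h] at hzw
          exact hwy (le_antisymm (hymax hzw) hzw))
        have hzw' : z < w := lt_of_le_of_ne hzw (by
          intro h
          rw [← h] at hwy
          rw [h] at hzy
          exact hwy (le_antisymm (h ▸ hzy) (h ▸ (hw (h ▸ hzy)))))
        exact hedge ⟨x, b, y, w, ⟨hxmin, hb, fun h => hbx h.symm, hymax, hw,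
          fun h => hwy h.symm, hxy, hxz'.trans hzw', hbz'.trans hzy', hbz'.trans hzw',
          z, hxz', hbz', hzy', hzw'⟩, Or.inl rfl, Or.inl rfl⟩
      obtain ⟨hax, ha'nx⟩ | ⟨ha'x, hanx⟩ := hxa <;> obtain ⟨huy, hu'ny⟩ | ⟨hu'y, huny⟩ := hyu
      · exact key a' u' ha' ha'z ha'nx hu' hzu' hu'ny (by rwa [hax] at haz) (by rwa [huy] at hzu)
      · exact key a' u ha' ha'z ha'nx hu hzu huny (by rwa [hax] at haz) (by rwa [hu'y] at hzu')
      · exact key a u' ha haz hanx hu' hzu' hu'ny (by rwa [ha'x] at ha'z) (by rwa [huy] at hzu)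
      · exact key a u ha haz hanx hu hzu huny (by rwa [ha'x] at ha'z) (by rwa [hu'y] at hzu')
    exact ⟨C, hCcrown, hxC, hyC,
      machine C ρ hCE hfixρ hminρ hmaxρ hcompρ hK1ρ (hC2gen ρ hfixρ)⟩
  · -- the general case `D ≥ 5`
    have hDo : D % 2 = 1 := by rw [Nat.even_iff] at hDodd; omega
    have hD5' : 5 ≤ D := by
      have h4 : D ≠ 4 := by omega
      omega
    set m := D + 1 with hm
    set ρ : α → α := fun v => c (g v % m) with hρ
    have hρval : ∀ v, ρ v = c (g v % m) := fun v => rfl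
    have hgx : g x = 0 := SimpleGraph.dist_self
    have hgy : g y = D := rfl
    have hgmin : ∀ a, IsMin a → g a % 2 = 0 := fun a ha =>
      Nat.even_iff.mp ((even_dist_iff x y (hreach a (Or.inl ha)) hxmin).mp ha)
    have hgmax : ∀ u, IsMax u → g u % 2 = 1 := by
      intro u hu
      have h1 : ¬ IsMin u := fun h => noIso hconn hxy.ne h hu
      have h2 : ¬ Even (g u) := fun h =>
        h1 ((even_dist_iff x y (hreach u (Or.inr hu)) hxmin).mpr h)
      rw [Nat.even_iff] at h2; omega
    have hparmod : ∀ k : ℕ, (k % m) % 2 = k % 2 := by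
      intro k
      have hk := Nat.div_add_mod k m
      have hme : m % 2 = 0 := by omega
      have ht2 : (m * (k / m)) % 2 = 0 := by
        rw [Nat.mul_mod, hme, Nat.zero_mul, Nat.zero_mod]
      set t := m * (k / m)
      omega
    have hmodlt : ∀ k : ℕ, k % m ≤ D := fun k => by
      have := Nat.mod_lt k (show 0 < m by omega); omega
    have hstepg : ∀ a u, IsMin a → IsMax u → a ≤ u →
        (a = x ∧ u = y) ∨ g u = g a + 1 ∨ g a = g u + 1 := by
      intro a u ha hu hau
      by_cases hp : a = x ∧ u = y
      · exact Or.inl hp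
      · have hne : a ≠ u := fun h => noIso hconn hxy.ne ha (h ▸ hu)
        have hau' : a < u := lt_of_le_of_ne hau hne
        have hadj : G.Adj a u := by
          refine ⟨Or.inl hau', Or.inl ha, Or.inr hu, hp, ?_⟩
          rintro ⟨rfl, rfl⟩
          exact noIso hconn hxy.ne ha hymax
        have h1 := hdist_step hadj
        have h2 := hdist_step hadj.symm
        have hpa := hgmin a ha
        have hpu := hgmax u hu
        right; omega
    have hfixρ : ∀ w ∈ C, ρ w = w := by
      rintro w ⟨i, hi', rfl⟩
      have hi : i ≤ D := hi'
      rw [hρval, hgc i hi, Nat.mod_eq_of_lt (by omega)]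
    have hminρ : ∀ a, IsMin a → ρ a ∈ C := fun a ha =>
      ⟨g a % m, Set.mem_Iic.mpr (hmodlt _), rfl⟩
    have hmaxρ : ∀ u, IsMax u → ρ u ∈ C := fun u hu =>
      ⟨g u % m, Set.mem_Iic.mpr (hmodlt _), rfl⟩
    have hcompρ : ∀ a u, IsMin a → IsMax u → a ≤ u → ρ a < ρ u := by
      intro a u ha hu hau
      rcases hstepg a u ha hu hau with ⟨rfl, rfl⟩ | h | h
      · rw [hρval, hρval, hgx, hgy, Nat.zero_mod, Nat.mod_eq_of_lt (by omega), hc0, hcD]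
        exact hxy
      · -- g u = g a + 1
        have hie : (g a % m) % 2 = 0 := by rw [hparmod]; exact hgmin a ha
        have hiD : g a % m ≤ D := hmodlt _
        have hiltD : g a % m < D := by omega
        have hmod : g u % m = g a % m + 1 := by
          rw [h, Nat.add_mod, Nat.mod_eq_of_lt (show (1:ℕ) < m by omega),
            Nat.mod_eq_of_lt (show g a % m + 1 < m by omega)]
        rw [hρval, hρval, hmod]
        exact hlt (g a % m) hiltD ((hpar _ hiD).mpr (Nat.even_iff.mpr hie))
      · -- g a = g u + 1
        have hje : (g u % m) % 2 = 1 := by rw [hparmod]; exact hgmax u hu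
        have hjD : g u % m ≤ D := hmodlt _
        by_cases hjD' : g u % m = D
        · have hmod : g a % m = 0 := by
            rw [h, Nat.add_mod, Nat.mod_eq_of_lt (show (1:ℕ) < m by omega), hjD', hm,
              Nat.mod_self]
          rw [hρval, hρval, hmod, hjD', hc0, hcD]
          exact hxy
        · have hjlt : g u % m < D := by omega
          have hmod : g a % m = g u % m + 1 := by
            rw [h, Nat.add_mod, Nat.mod_eq_of_lt (show (1:ℕ) < m by omega),
              Nat.mod_eq_of_lt (show g u % m + 1 < m by omega)]
          rw [hρval, hρval, hmod]
          exact hlt' (g u % m) hjlt ((hpar _ (by omega)).mpr (Nat.even_iff.mpr (by omega)))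
    have h4z : (4 : ZMod m) ≠ 0 := by
      intro h
      have h' : ((4 : ℕ) : ZMod m) = 0 := by exact_mod_cast h
      rw [ZMod.natCast_eq_zero_iff] at h'
      have := Nat.le_of_dvd (by norm_num) h'
      omega
    have hρeq_iff : ∀ v w : α, (ρ v = ρ w ↔ ((g v : ZMod m) = (g w : ZMod m))) := by
      intro v w
      rw [hρval, hρval, ZMod.natCast_eq_natCast_iff']
      constructor
      · intro h
        exact hcinj _ (hmodlt _) _ (hmodlt _) h
      · intro h; rw [h]
    have hstepι : ∀ a u, IsMin a → IsMax u → a ≤ u →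
        ((g u : ZMod m) = (g a : ZMod m) + 1 ∨ (g a : ZMod m) = (g u : ZMod m) + 1) := by
      intro a u ha hu hau
      rcases hstepg a u ha hu hau with ⟨rfl, rfl⟩ | h | h
      · right
        rw [hgx, hgy]
        have hDm : ((D : ℕ) : ZMod m) + 1 = ((m : ℕ) : ZMod m) := by
          rw [hm]; push_cast; ring
        rw [hDm, ZMod.natCast_self]
        norm_num
      · left; rw [h]; push_cast; ring
      · right; rw [h]; push_cast; ring
    have hK1ρ : ∀ z a a' u u', IsMin a → a ≤ z → IsMin a' → a' ≤ z →
        IsMax u → z ≤ u → IsMax u' → z ≤ u' → ρ a ≠ ρ a' → ρ u = ρ u' := by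
      intro z a a' u u' ha haz ha' ha'z hu hzu hu' hzu' hne
      by_contra hneU
      have hne2 : ¬ ((g a : ZMod m) = (g a' : ZMod m)) := fun h => hne ((hρeq_iff a a').mpr h)
      have hneU2 : ¬ ((g u : ZMod m) = (g u' : ZMod m)) := fun h => hneU ((hρeq_iff u u').mpr h)
      clear hne hneU
      have h1 := hstepι a u ha hu (haz.trans hzu)
      have h2 := hstepι a' u ha' hu (ha'z.trans hzu)
      have h3 := hstepι a u' ha hu' (haz.trans hzu')
      have h4 := hstepι a' u' ha' hu' (ha'z.trans hzu')
      rcases h1 with h1 | h1 <;> rcases h2 with h2 | h2 <;> rcases h3 with h3 | h3 <;>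
        rcases h4 with h4 | h4 <;>
        first
          | exact hne2 (by linear_combination h1 - h2)
          | exact hne2 (by linear_combination h2 - h1)
          | exact hne2 (by linear_combination h4 - h3)
          | exact hne2 (by linear_combination h3 - h4)
          | exact hneU2 (by linear_combination h1 - h3)
          | exact hneU2 (by linear_combination h3 - h1)
          | exact h4z (by linear_combination - h1 - h2 - h3 - h4)
    exact ⟨C, hCcrown, hxC, hyC,
      machine C ρ hCE hfixρ hminρ hmaxρ hcompρ hK1ρ (hC2gen ρ hfixρ)⟩
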